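/- Let ε > 0. If g(n) = O(n^{a+ε}) as n → ∞, then f(n) = O(n^{a+ε}) as n → ∞; and if g(n) = Ω(n^{a+ε}) as n → ∞, then f(n) = Ω(n^{a+ε}) as n → ∞. -/

import Mathlib

open Filter Asymptotics

lemma slope_key (s : ℝ) :
    Tendsto (fun n : ℕ => (n : ℝ) * ((1 + 1 / n) ^ s - 1)) atTop (nhds s) := by
  have hd : HasDerivAt (fun x : ℝ => x ^ s) (s * (1:ℝ) ^ (s - 1)) 1 :=
    Real.hasDerivAt_rpow_const (Or.inl one_ne_zero)
  rw [Real.one_rpow, mul_one] at hd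
  have hs := hasDerivAt_iff_tendsto_slope.mp hd
  have h1 : Tendsto (fun n : ℕ => 1 + 1 / (n : ℝ)) atTop (nhdsWithin 1 {(1:ℝ)}ᶜ) := by
    rw [tendsto_nhdsWithin_iff]
    constructor
    · simpa using (tendsto_const_nhds (x := (1:ℝ))).add (tendsto_one_div_atTop_nhds_zero_nat : Tendsto (fun n : ℕ => 1 / (n : ℝ)) atTop (nhds 0))
    · filter_upwards [eventually_ge_atTop 1] with n hn
      have h2 : (0:ℝ) < 1 / n := by positivity
      simp only [Set.mem_compl_iff, Set.mem_singleton_iff]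
      intro h; linarith [h ▸ h2]
  refine (hs.comp h1).congr' ?_
  filter_upwards [eventually_ge_atTop 1] with n hn
  have hn' : (0:ℝ) < n := by exact_mod_cast hn
  simp only [Function.comp, slope_def_field]
  rw [Real.one_rpow]
  field_simp
  ring

lemma phi_bounds (a ε : ℝ) (hε : 0 < ε) :
    ∀ᶠ n : ℕ in atTop,
      ε / 2 ≤ (n : ℝ) * ((1 + 1 / n) ^ (a + ε) - 1) - a ∧
      (n : ℝ) * ((1 + 1 / n) ^ (a + ε) - 1) - a ≤ 2 * ε := by
  have h2 : Tendsto (fun n : ℕ => (n:ℝ) * ((1 + 1 / n) ^ (a + ε) - 1) - a) atTop (nhds ε) := by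
    simpa using (slope_key (a + ε)).sub_const a
  have := h2.eventually (Metric.ball_mem_nhds ε (half_pos hε))
  filter_upwards [this] with n hn
  rw [Real.dist_eq, abs_lt] at hn
  constructor <;> linarith

theorem stmt_9 (n0 : ℕ) (hn0 : 1 ≤ n0) (a : ℝ) (ha : -(n0 : ℝ) < a)
    (f g : ℕ → ℝ)
    (hf : ∀ n, n0 ≤ n → 0 < f n) (hg : ∀ n, n0 ≤ n → 0 < g n)
    (hrec : ∀ n, n0 ≤ n → f (n + 1) = (1 + a / n) * f n + g n / n)
    (ε : ℝ) (hε : 0 < ε) :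
    ((fun n : ℕ => g n) =O[atTop] (fun n : ℕ => (n : ℝ) ^ (a + ε)) →
      (fun n : ℕ => f n) =O[atTop] fun n : ℕ => (n : ℝ) ^ (a + ε)) ∧
    ((∃ c : ℝ, 0 < c ∧ ∃ N : ℕ, ∀ n, N ≤ n → c * (n : ℝ) ^ (a + ε) ≤ g n) →
      ∃ c : ℝ, 0 < c ∧ ∃ N : ℕ, ∀ n, N ≤ n → c * (n : ℝ) ^ (a + ε) ≤ f n) := by
  set s := a + ε with hsdef
  obtain ⟨N₂, hN₂⟩ := eventually_atTop.mp (phi_bounds a ε hε)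
  have step : ∀ n : ℕ, n0 ≤ n →
      (1:ℝ) ≤ n ∧ 0 < (n:ℝ) ∧ 0 < 1 + a / (n:ℝ) ∧ 0 < (n:ℝ) ^ s ∧
      ((n:ℝ) + 1) ^ s = (n:ℝ) ^ s * (1 + 1/(n:ℝ)) ^ s := by
    intro n hn
    have h1 : (1:ℝ) ≤ n := by exact_mod_cast le_trans hn0 hn
    have hnpos : (0:ℝ) < n := by linarith
    have hna : -(n:ℝ) < a := by
      refine lt_of_le_of_lt ?_ ha
      have : (n0:ℝ) ≤ n := by exact_mod_cast hn
      linarith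
    have hpos : 0 < 1 + a / (n:ℝ) := by
      have : -1 < a / (n:ℝ) := by
        rw [lt_div_iff₀ hnpos]; linarith
      linarith
    refine ⟨h1, hnpos, hpos, Real.rpow_pos_of_pos hnpos s, ?_⟩
    have he : ((n:ℝ) + 1) = (n:ℝ) * (1 + 1/(n:ℝ)) := by field_simp
    rw [he, Real.mul_rpow hnpos.le (by positivity)]
  constructor
  · -- O direction
    intro hO
    rw [isBigO_iff] at hO ⊢
    obtain ⟨c, hc⟩ := hO
    obtain ⟨N₁, hN₁⟩ := eventually_atTop.mp hc
    have hcpos : 0 < c := by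
      set m := max N₁ n0 with hm
      have hm1 : n0 ≤ m := le_max_right _ _
      have hgp := hg m hm1
      have hb := hN₁ m (le_max_left _ _)
      have hmp : (0:ℝ) < m := (step m hm1).2.1
      have hgn : 0 < ‖g m‖ := norm_pos_iff.mpr hgp.ne'
      have hnsp : 0 < ‖(m:ℝ) ^ s‖ := norm_pos_iff.mpr (Real.rpow_pos_of_pos hmp s).ne'
      nlinarith [lt_of_lt_of_le hgn hb]
    set N := max (max N₁ N₂) n0 with hN
    have hNn0 : n0 ≤ N := le_max_right _ _
    obtain ⟨-, -, -, hNs, -⟩ := step N hNn0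
    set C := max (2*c/ε) (f N / (N:ℝ)^s) with hC
    have hCpos : 0 < C := lt_of_lt_of_le (by positivity) (le_max_left _ _)
    have key : ∀ n, N ≤ n → f n ≤ C * (n:ℝ)^s := by
      intro n hn
      induction n, hn using Nat.le_induction with
      | base => exact (div_le_iff₀ hNs).mp (le_max_right _ _)
      | succ n hn ih =>
        have hn0' : n0 ≤ n := le_trans hNn0 hn
        obtain ⟨h1, hnpos, hapos, hP, hsplit⟩ := step n hn0'
        have hgb : g n ≤ c * (n:ℝ)^s := by
          have hb := hN₁ n (le_trans (le_trans (le_max_left _ _) (le_max_left _ _)) hn)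
          rw [Real.norm_eq_abs, Real.norm_eq_abs, abs_of_pos (hg n hn0'),
            abs_of_pos (Real.rpow_pos_of_pos hnpos s)] at hb
          exact hb
        have hφ := (hN₂ n (le_trans (le_trans (le_max_right N₁ N₂) (le_max_left _ _)) hn)).1
        set Q := (1 + 1/(n:ℝ))^s with hQ
        have hkey : C*(n:ℝ) + C*a + c ≤ C*(n:ℝ)*Q := by
          have h1' : c ≤ C * (ε/2) := by
            have he : (2*c/ε)*(ε/2) = c := by field_simp
            calc c = (2*c/ε)*(ε/2) := he.symm
              _ ≤ C*(ε/2) := mul_le_mul_of_nonneg_right (le_max_left _ _) (by positivity)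
          have h2' : C*(ε/2) ≤ C*((n:ℝ)*(Q-1)-a) := mul_le_mul_of_nonneg_left hφ hCpos.le
          have hr : C*((n:ℝ)*(Q-1)-a) = C*(n:ℝ)*Q - C*n - C*a := by ring
          linarith
        rw [hrec n hn0']
        push_cast
        rw [hsplit]
        calc (1+a/(n:ℝ))*f n + g n/n
            ≤ (1+a/(n:ℝ))*(C*(n:ℝ)^s) + (c*(n:ℝ)^s)/n := by
              gcongr
          _ = ((n:ℝ)^s/n) * (C*(n:ℝ) + C*a + c) := by field_simp
          _ ≤ ((n:ℝ)^s/n) * (C*(n:ℝ)*Q) := mul_le_mul_of_nonneg_left hkey (by positivity)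
          _ = C * ((n:ℝ)^s * Q) := by field_simp
    refine ⟨C, ?_⟩
    filter_upwards [eventually_ge_atTop N] with n hn
    have hn0' : n0 ≤ n := le_trans hNn0 hn
    obtain ⟨-, hnpos, -, hP, -⟩ := step n hn0'
    rw [Real.norm_eq_abs, Real.norm_eq_abs, abs_of_pos (hf n hn0'), abs_of_pos hP]
    exact key n hn
  · -- Ω direction
    rintro ⟨c, hc, N₁, hgl⟩
    set N := max (max N₁ N₂) n0 with hN
    have hNn0 : n0 ≤ N := le_max_right _ _
    obtain ⟨-, -, -, hNs, -⟩ := step N hNn0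
    set c' := min (c/(2*ε)) (f N / (N:ℝ)^s) with hc'
    have hc'pos : 0 < c' := lt_min (by positivity) (div_pos (hf N hNn0) hNs)
    refine ⟨c', hc'pos, N, ?_⟩
    intro n hn
    induction n, hn using Nat.le_induction with
    | base => exact (le_div_iff₀ hNs).mp (min_le_right _ _)
    | succ n hn ih =>
      have hn0' : n0 ≤ n := le_trans hNn0 hn
      obtain ⟨h1, hnpos, hapos, hP, hsplit⟩ := step n hn0'
      have hgb : c * (n:ℝ)^s ≤ g n := hgl n (le_trans (le_trans (le_max_left _ _) (le_max_left _ _)) hn)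
      have hφ := (hN₂ n (le_trans (le_trans (le_max_right N₁ N₂) (le_max_left _ _)) hn)).2
      set Q := (1 + 1/(n:ℝ))^s with hQ
      have hkey : c'*(n:ℝ)*Q ≤ c'*(n:ℝ) + c'*a + c := by
        have h1' : c'*((n:ℝ)*(Q-1)-a) ≤ c'*(2*ε) := mul_le_mul_of_nonneg_left hφ hc'pos.le
        have h2' : c'*(2*ε) ≤ c := by
          have he : (c/(2*ε))*(2*ε) = c := by field_simp
          calc c'*(2*ε) ≤ (c/(2*ε))*(2*ε) := mul_le_mul_of_nonneg_right (min_le_left _ _) (by positivity)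
            _ = c := he
        have hr : c'*((n:ℝ)*(Q-1)-a) = c'*(n:ℝ)*Q - c'*n - c'*a := by ring
        linarith
      rw [hrec n hn0']
      push_cast
      rw [hsplit]
      calc c' * ((n:ℝ)^s * Q) = ((n:ℝ)^s/n)*(c'*(n:ℝ)*Q) := by field_simp
        _ ≤ ((n:ℝ)^s/n)*(c'*(n:ℝ) + c'*a + c) := mul_le_mul_of_nonneg_left hkey (by positivity)
        _ = (1+a/(n:ℝ))*(c'*(n:ℝ)^s) + (c*(n:ℝ)^s)/n := by field_simp
        _ ≤ (1+a/(n:ℝ))*(f n) + g n/n := by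
              gcongr
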